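/- Let N be a real n×q matrix, A_e a real m_e×n matrix, A_i a real m_i×n matrix, A₀ a real m₀×n matrix, and Ā a real m̄×n matrix with Ā·N = 0. Let λ₀, w₀ : Fin m₀ → ℝ with λ₀ j > 0 and w₀ j > 0 for all j, let d : Fin m_i → ℝ with d j > 0 for all j, and let x ∈ ℝⁿ, b_e ∈ ℝ^{m_e}, λ̄ ∈ ℝ^{m̄}, F ∈ ℝ^{m₀}, G ∈ ℝ^{m_i}. Define H := [ diag(fun j => √(λ₀ j / w₀ j)) · A₀ · N ; diag(fun j => √(d j)) · A_i · N ; A_e · N ] and g := ( diag(fun j => √(w₀ j / λ₀ j))·F ; diag(fun j => 1/√(d j))·G ; b_e − A_e·x ) stacked conformally. Then Hᵀ·g = Nᵀ·r₁, where r₁ := Āᵀ·λ̄ + A₀ᵀ·F + A_eᵀ·(b_e − A_e·x) + A_iᵀ·G. -/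

import Mathlib

open Matrix

/-- Right-hand-side identity underlying the least-squares form of the IPM-HLSP:
with `H = [diag √(λ₀/w₀)·A₀·N ; diag √d·A_i·N ; A_e·N]` and the conformally stacked
vector `g = (diag √(w₀/λ₀)·F ; diag (1/√d)·G ; b_e − A_e·x)`, one has
`Hᵀ·g = Nᵀ·r₁` where `r₁ = Āᵀ·λ̄ + A₀ᵀ·F + A_eᵀ·(b_e − A_e·x) + A_iᵀ·G`,
provided `Ā·N = 0`. -/
theorem stacked_rhs_eq_projected_rhs {n q me mi m₀ mb : ℕ}
    (N : Matrix (Fin n) (Fin q) ℝ)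
    (Ae : Matrix (Fin me) (Fin n) ℝ) (Ai : Matrix (Fin mi) (Fin n) ℝ)
    (A₀ : Matrix (Fin m₀) (Fin n) ℝ) (Ab : Matrix (Fin mb) (Fin n) ℝ)
    (hAbN : Ab * N = 0)
    (lam₀ w₀ : Fin m₀ → ℝ)
    (hlam₀ : ∀ j, 0 < lam₀ j) (hw₀ : ∀ j, 0 < w₀ j)
    (d : Fin mi → ℝ) (hd : ∀ j, 0 < d j)
    (x : Fin n → ℝ) (be : Fin me → ℝ) (lamb : Fin mb → ℝ)
    (F : Fin m₀ → ℝ) (G : Fin mi → ℝ)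
    (H : Matrix ((Fin m₀ ⊕ Fin mi) ⊕ Fin me) (Fin q) ℝ)
    (hH : H = fromRows
      (fromRows
        (Matrix.diagonal (fun j => Real.sqrt (lam₀ j / w₀ j)) * A₀ * N)
        (Matrix.diagonal (fun j => Real.sqrt (d j)) * Ai * N))
      (Ae * N))
    (g : (Fin m₀ ⊕ Fin mi) ⊕ Fin me → ℝ)
    (hg : g = Sum.elim
      (Sum.elim
        (Matrix.diagonal (fun j => Real.sqrt (w₀ j / lam₀ j)) *ᵥ F)
        (Matrix.diagonal (fun j => 1 / Real.sqrt (d j)) *ᵥ G))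
      (be - Ae *ᵥ x))
    (r₁ : Fin n → ℝ)
    (hr₁ : r₁ = Abᵀ *ᵥ lamb + A₀ᵀ *ᵥ F + Aeᵀ *ᵥ (be - Ae *ᵥ x) + Aiᵀ *ᵥ G) :
    Hᵀ *ᵥ g = Nᵀ *ᵥ r₁ := by

  subst hH hg hr₁
  have hD1 : Matrix.diagonal (fun j => Real.sqrt (lam₀ j / w₀ j)) *
      Matrix.diagonal (fun j => Real.sqrt (w₀ j / lam₀ j)) = (1 : Matrix (Fin m₀) (Fin m₀) ℝ) := by
    rw [Matrix.diagonal_mul_diagonal]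
    convert Matrix.diagonal_one with j
    have h1 := hlam₀ j; have h2 := hw₀ j
    rw [← Real.sqrt_mul (by positivity), div_mul_div_comm, mul_comm (lam₀ j),
      div_self (by positivity), Real.sqrt_one]
  have hD2 : Matrix.diagonal (fun j => Real.sqrt (d j)) *
      Matrix.diagonal (fun j => 1 / Real.sqrt (d j)) = (1 : Matrix (Fin mi) (Fin mi) ℝ) := by
    rw [Matrix.diagonal_mul_diagonal]
    convert Matrix.diagonal_one with j
    have h1 := hd j
    exact mul_one_div_cancel (by positivity)
  rw [Matrix.transpose_fromRows, Matrix.transpose_fromRows,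
    Matrix.fromCols_mulVec_sumElim, Matrix.fromCols_mulVec_sumElim]
  have h0 : Nᵀ *ᵥ (Abᵀ *ᵥ lamb) = 0 := by
    rw [Matrix.mulVec_mulVec, ← Matrix.transpose_mul, hAbN, Matrix.transpose_zero,
      Matrix.zero_mulVec]
  simp only [Matrix.mulVec_add, h0, zero_add, Matrix.transpose_mul,
    Matrix.diagonal_transpose, Matrix.mulVec_mulVec, Matrix.mul_assoc]
  rw [hD1, hD2]
  simp [Matrix.mul_assoc]
  abel
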